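/- Let G and H be graphs with χ_v(G) = χ_v(H), and suppose every optimal vector coloring of G is injective (assigns distinct vectors to distinct vertices). Then every graph homomorphism from G to H is injective. -/

import Mathlib

open SimpleGraph

/-- A vector `t`-coloring of `G`: an assignment of unit vectors to the vertices such
that adjacent vertices receive vectors with inner product at most `-1/(t-1)`. -/
def IsVectorColoring {V : Type*} (G : SimpleGraph V) {d : ℕ} (t : ℝ)
    (p : V → EuclideanSpace ℝ (Fin d)) : Prop :=
  (∀ v, ‖p v‖ = 1) ∧ ∀ u v : V, G.Adj u v → (inner ℝ (p u) (p v) : ℝ) ≤ -1 / (t - 1)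

/-- The vector chromatic number of `G`. -/
noncomputable def vecChrom {V : Type*} (G : SimpleGraph V) : ℝ :=
  sInf {t : ℝ | 2 ≤ t ∧ ∃ (d : ℕ) (p : V → EuclideanSpace ℝ (Fin d)), IsVectorColoring G t p}

/-- Zero-padding of a vector into a higher-dimensional Euclidean space. -/
noncomputable def vcPad {r N : ℕ} (h : r ≤ N) (x : EuclideanSpace ℝ (Fin r)) :
    EuclideanSpace ℝ (Fin N) :=
  WithLp.toLp 2 (fun i => if h' : (i : ℕ) < r then x ⟨i, h'⟩ else 0)

lemma vcPad_inner {r N : ℕ} (h : r ≤ N) (x y : EuclideanSpace ℝ (Fin r)) :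
    (inner ℝ (vcPad h x) (vcPad h y) : ℝ) = inner ℝ x y := by
  simp only [PiLp.inner_apply, RCLike.inner_apply, starRingEnd_apply, star_trivial]
  set f : ℕ → ℝ := fun j => if h' : j < r then x ⟨j, h'⟩ * y ⟨j, h'⟩ else 0 with hf
  have key : ∀ i : Fin N, vcPad h x i * vcPad h y i = f (i : ℕ) := by
    intro i
    by_cases h' : (i : ℕ) < r <;> simp [vcPad, hf, h']
  calc ∑ i : Fin N, vcPad h y i * vcPad h x i
      = ∑ i : Fin N, f (i : ℕ) := Finset.sum_congr rfl fun i _ => (mul_comm _ _).trans (key i)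
    _ = ∑ i ∈ Finset.range N, f i := Fin.sum_univ_eq_sum_range f N
    _ = ∑ i ∈ Finset.range r, f i := by
        refine (Finset.sum_subset (Finset.range_subset_range.mpr h) ?_).symm
        intro i _ hi
        simp [hf, Finset.mem_range.not.mp hi]
    _ = ∑ i : Fin r, f (i : ℕ) := (Fin.sum_univ_eq_sum_range f r).symm
    _ = ∑ i : Fin r, y i * x i := by
        refine Finset.sum_congr rfl fun i _ => ?_
        rw [mul_comm]
        simp [hf, i.isLt]

lemma vcPad_norm {r N : ℕ} (h : r ≤ N) (x : EuclideanSpace ℝ (Fin r)) :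
    ‖vcPad h x‖ = ‖x‖ := by
  have h1 := vcPad_inner h x x
  rw [real_inner_self_eq_norm_sq, real_inner_self_eq_norm_sq] at h1
  rw [← Real.sqrt_sq (norm_nonneg (vcPad h x)), h1, Real.sqrt_sq (norm_nonneg x)]

/-- Any vector coloring can be replaced by one living in dimension `card V`. -/
lemma vc_reduce {V : Type*} [Fintype V] (H : SimpleGraph V) {d : ℕ} {t : ℝ}
    {p : V → EuclideanSpace ℝ (Fin d)} (hp : IsVectorColoring H t p) :
    ∃ q : V → EuclideanSpace ℝ (Fin (Fintype.card V)), IsVectorColoring H t q := by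
  classical
  set S := Submodule.span ℝ (Set.range p) with hS
  have hmem : ∀ v, p v ∈ S := fun v => Submodule.subset_span ⟨v, rfl⟩
  have hr : Module.finrank ℝ S ≤ Fintype.card V := by
    have h1 : (Finset.univ.image p : Set (EuclideanSpace ℝ (Fin d))) = Set.range p := by
      simp [Finset.coe_image]
    have h2 := finrank_span_finset_le_card (R := ℝ) (Finset.univ.image p)
    rw [Set.finrank, h1] at h2
    exact h2.trans ((Finset.card_image_le).trans (by simp))
  let b := stdOrthonormalBasis ℝ S
  refine ⟨fun v => vcPad hr (b.repr ⟨p v, hmem v⟩), ?_, ?_⟩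
  · intro v
    rw [vcPad_norm, b.repr.norm_map]
    exact hp.1 v
  · intro u v huv
    have h3 : (inner ℝ (vcPad hr (b.repr ⟨p u, hmem u⟩)) (vcPad hr (b.repr ⟨p v, hmem v⟩)) : ℝ)
        = inner ℝ (p u) (p v) := by
      rw [vcPad_inner, b.repr.inner_map_map, Submodule.coe_inner]
    rw [h3]
    exact hp.2 u v huv

/-- A vector `t'`-coloring is also a vector `t`-coloring for `t' ≤ t` (with `2 ≤ t'`). -/
lemma vc_mono {V : Type*} (H : SimpleGraph V) {d : ℕ} {t t' : ℝ} (h2 : 2 ≤ t') (htt : t' ≤ t)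
    {p : V → EuclideanSpace ℝ (Fin d)} (hp : IsVectorColoring H t' p) :
    IsVectorColoring H t p := by
  refine ⟨hp.1, fun u v huv => (hp.2 u v huv).trans ?_⟩
  have h0 : (0 : ℝ) < t' - 1 := by linarith
  have h1 : 1 / (t - 1) ≤ 1 / (t' - 1) := one_div_le_one_div_of_le h0 (by linarith)
  rw [neg_div, neg_div]
  linarith

/-- The vector chromatic number is attained, provided some vector coloring exists. -/
lemma vc_attained {V : Type*} [Fintype V] (H : SimpleGraph V)
    (hne : {t : ℝ | 2 ≤ t ∧ ∃ (d : ℕ) (p : V → EuclideanSpace ℝ (Fin d)),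
      IsVectorColoring H t p}.Nonempty) :
    ∃ p : V → EuclideanSpace ℝ (Fin (Fintype.card V)), IsVectorColoring H (vecChrom H) p := by
  classical
  set Sc := {t : ℝ | 2 ≤ t ∧ ∃ (d : ℕ) (p : V → EuclideanSpace ℝ (Fin d)),
      IsVectorColoring H t p} with hSc
  set N := Fintype.card V with hN
  have hm : vecChrom H = sInf Sc := rfl
  have hm2 : 2 ≤ sInf Sc := le_csInf hne fun t ht => ht.1
  set m := sInf Sc with hmdef
  -- the (fixed-dimension) coloring sets
  set C : ℝ → Set (V → EuclideanSpace ℝ (Fin N)) := fun t => {p | IsVectorColoring H t p} with hC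
  have hclosed : ∀ t, IsClosed (C t) := by
    intro t
    have : C t = (⋂ v, {p : V → EuclideanSpace ℝ (Fin N) | ‖p v‖ = 1}) ∩
        ⋂ u, ⋂ v, ⋂ (_ : H.Adj u v),
          {p : V → EuclideanSpace ℝ (Fin N) | (inner ℝ (p u) (p v) : ℝ) ≤ -1 / (t - 1)} := by
      ext p
      simp [hC, IsVectorColoring, Set.mem_iInter, forall_and]
    rw [this]
    refine IsClosed.inter (isClosed_iInter fun v => ?_)
      (isClosed_iInter fun u => isClosed_iInter fun v => isClosed_iInter fun _ => ?_)
    · exact isClosed_eq ((continuous_apply v).norm) continuous_const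
    · exact isClosed_le (Continuous.inner (continuous_apply u) (continuous_apply v))
        continuous_const
  set K : Set (V → EuclideanSpace ℝ (Fin N)) :=
    Set.univ.pi (fun _ => Metric.sphere (0 : EuclideanSpace ℝ (Fin N)) 1) with hK
  have hKc : IsCompact K := isCompact_univ_pi fun _ => isCompact_sphere 0 1
  have hsub : ∀ t, C t ⊆ K := by
    intro t p hp v _
    exact mem_sphere_zero_iff_norm.mpr (hp.1 v)
  have hcomp : ∀ t, IsCompact (C t) := fun t => hKc.of_isClosed_subset (hclosed t) (hsub t)
  -- the sequence of thresholds
  set T : ℕ → ℝ := fun n => m + 1 / ((n : ℝ) + 1) with hT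
  have hTm : ∀ n, m < T n := by
    intro n
    have : (0 : ℝ) < 1 / ((n : ℝ) + 1) := by positivity
    simp only [hT]; linarith
  have hTne : ∀ n, (C (T n)).Nonempty := by
    intro n
    obtain ⟨t', ht'S, ht'lt⟩ := exists_lt_of_csInf_lt hne (hTm n)
    obtain ⟨h2t', d, p, hp⟩ := ht'S
    obtain ⟨q, hq⟩ := vc_reduce H hp
    exact ⟨q, vc_mono H h2t' ht'lt.le hq⟩
  have hanti : ∀ n, C (T (n + 1)) ⊆ C (T n) := by
    intro n p hp
    have h1 : T (n + 1) ≤ T n := by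
      have : 1 / ((n : ℝ) + 1 + 1) ≤ 1 / ((n : ℝ) + 1) :=
        one_div_le_one_div_of_le (by positivity) (by linarith)
      simp only [hT, Nat.cast_add, Nat.cast_one]; linarith
    exact vc_mono H (by linarith [hTm (n + 1)]) h1 hp
  obtain ⟨p, hp⟩ := IsCompact.nonempty_iInter_of_sequence_nonempty_isCompact_isClosed
    (fun n => C (T n)) hanti hTne (hcomp (T 0)) (fun n => hclosed (T n))
  have hpn : ∀ n, p ∈ C (T n) := by
    intro n; exact Set.mem_iInter.mp hp n
  refine ⟨p, (hpn 0).1, fun u v huv => ?_⟩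
  have hlim : Filter.Tendsto (fun n : ℕ => -1 / (T n - 1)) Filter.atTop (nhds (-1 / (m - 1))) := by
    have h1 : Filter.Tendsto T Filter.atTop (nhds m) := by
      rw [hT]
      simpa using (tendsto_const_nhds (x := m)).add tendsto_one_div_add_atTop_nhds_zero_nat
    exact Filter.Tendsto.div tendsto_const_nhds (h1.sub tendsto_const_nhds)
      (by linarith : (0:ℝ) < m - 1).ne'
  rw [hm]
  exact ge_of_tendsto' hlim fun n => (hpn n).2 u v huv

/-- If `χ_v(G) = χ_v(H)` and every optimal vector coloring of `G` is injective,
then every graph homomorphism `G → H` is injective. -/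
theorem stmt1 {VG VH : Type*} [Fintype VG] [Fintype VH]
    (G : SimpleGraph VG) (H : SimpleGraph VH)
    (hchi : vecChrom G = vecChrom H)
    (hinj : ∀ (d : ℕ) (p : VG → EuclideanSpace ℝ (Fin d)),
      IsVectorColoring G (vecChrom G) p → Function.Injective p)
    (φ : G →g H) :
    Function.Injective φ := by
  by_cases hne : {t : ℝ | 2 ≤ t ∧ ∃ (d : ℕ) (p : VH → EuclideanSpace ℝ (Fin d)),
      IsVectorColoring H t p}.Nonempty
  · obtain ⟨p, hp⟩ := vc_attained H hne
    have hq : IsVectorColoring G (vecChrom G) (fun v => p (φ v)) := by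
      rw [hchi]
      exact ⟨fun v => hp.1 _, fun u v huv => hp.2 _ _ (φ.map_adj huv)⟩
    have hqi := hinj _ _ hq
    intro a b hab
    exact hqi (show p (φ a) = p (φ b) by rw [hab])
  · have h0 : vecChrom H = 0 := by
      unfold vecChrom
      rw [Set.not_nonempty_iff_eq_empty.mp hne, Real.sInf_empty]
    have hG0 : vecChrom G = 0 := hchi.trans h0
    set p : VG → EuclideanSpace ℝ (Fin 1) := fun _ => WithLp.toLp 2 (fun _ => 1) with hpdef
    have hp : IsVectorColoring G (vecChrom G) p := by
      rw [hG0]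
      constructor
      · intro v
        rw [EuclideanSpace.norm_eq]
        simp [hpdef]
      · intro u v _
        have h1 : (inner ℝ (p u) (p v) : ℝ) = 1 := by
          simp [hpdef, PiLp.inner_apply, EuclideanSpace.norm_eq]
        rw [h1]
        norm_num
    have hinj' := hinj 1 p hp
    intro a b _
    exact hinj' rfl
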